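/- arXiv:1112.3066 — 5 statements merged into one kernel-verified Lean document; each statement's English description precedes it below -/
import Mathlib

section
/- Let G = ⟨V, E, ω, λ⟩ be a finite weighted coloured-edge graph with n ≥ 2 vertices and k colours such that for any ordered pair of distinct vertices and any colour there is at most one edge from the first vertex to the second with that colour. Then for any two vertices u and v, the total number of minimal paths from u to v (counting comparable minimal paths of equal weight separately) is at most k·(k+1)^(n−2). -/
open Classical

/-- A weighted coloured-edge graph: a directed multigraph with vertex set `V`,
edge type `E` (each edge `e` has an initial vertex `src e` and a terminal vertex
`dst e`, and self-loops are excluded), a strictly positive real weight on each edge,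
and a surjective colour function onto the colour set `M`. -/
structure WCEGraph (V : Type) (M : Type) where
  E : Type
  src : E → V
  dst : E → V
  wt : E → ℝ
  col : E → M
  wt_pos : ∀ e, 0 < wt e
  no_loop : ∀ e, src e ≠ dst e
  col_surj : Function.Surjective col

namespace WCEGraph

variable {V M : Type} (G : WCEGraph V M)

/-- `p` is a path from `u` to `v`: a nonempty finite sequence of edges, each edge's
terminal vertex being the next edge's initial vertex, starting at `u` and ending at `v`. -/
def IsPath (u v : V) (p : List G.E) : Prop :=
  p ≠ [] ∧ (∀ e ∈ p.head?, G.src e = u) ∧ (∀ e ∈ p.getLast?, G.dst e = v) ∧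
    p.Chain' (fun a b => G.dst a = G.src b)

/-- The weight `ω_c(p)` of the path `p` in colour `c`: the sum of the weights of
those edges of `p` having colour `c`. -/
noncomputable def colWeight (c : M) (p : List G.E) : ℝ :=
  (p.map (fun e => if G.col e = c then G.wt e else 0)).sum

/-- The preorder on paths: `p ≤ q` iff the weight of `p` in each colour is at most
that of `q`. -/
def pathLE (p q : List G.E) : Prop :=
  ∀ c : M, G.colWeight c p ≤ G.colWeight c q

/-- `p` is a minimal path from `u` to `v`: every path `q` from `u` to `v` with
`q ≤ p` has the same weight as `p` in every colour. -/
def IsMinimal (u v : V) (p : List G.E) : Prop :=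
  G.IsPath u v p ∧
    ∀ q, G.IsPath u v q → G.pathLE q p → ∀ c : M, G.colWeight c q = G.colWeight c p

end WCEGraph

namespace WCEGraph

variable {V M : Type} {G : WCEGraph V M}

/-! ### weight lemmas -/

lemma colWeight_nil (c : M) : G.colWeight c ([] : List G.E) = 0 := rfl

lemma colWeight_cons (c : M) (e : G.E) (p : List G.E) :
    G.colWeight c (e :: p) = (if G.col e = c then G.wt e else 0) + G.colWeight c p := by
  simp [colWeight]

lemma colWeight_append (c : M) (p q : List G.E) :
    G.colWeight c (p ++ q) = G.colWeight c p + G.colWeight c q := by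
  simp [colWeight]

lemma colWeight_nonneg (c : M) (p : List G.E) : 0 ≤ G.colWeight c p := by
  induction p with
  | nil => simp [colWeight_nil]
  | cons e p ih =>
      rw [colWeight_cons]
      have : (0:ℝ) ≤ if G.col e = c then G.wt e else 0 := by
        split_ifs
        · exact (G.wt_pos e).le
        · exact le_refl 0
      linarith

lemma wt_head_le_colWeight (e : G.E) (p : List G.E) :
    G.wt e ≤ G.colWeight (G.col e) (e :: p) := by
  rw [colWeight_cons, if_pos rfl]
  have := colWeight_nonneg (G := G) (G.col e) p
  linarith

lemma ite_wt_nonneg (c : M) (e : G.E) : (0:ℝ) ≤ if G.col e = c then G.wt e else 0 := by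
  split_ifs
  · exact (G.wt_pos e).le
  · exact le_refl 0

lemma ite_wt_le {e f : G.E} (h : G.col f = G.col e) (hw : G.wt f ≤ G.wt e) (c : M) :
    (if G.col f = c then G.wt f else 0) ≤ (if G.col e = c then G.wt e else 0) := by
  rw [h]; split_ifs
  · exact hw
  · exact le_refl 0

/-! ### path lemmas -/

lemma IsPath.src_head {u v : V} {e : G.E} {p : List G.E} (h : G.IsPath u v (e :: p)) :
    G.src e = u := h.2.1 e rfl

lemma isPath_singleton {u v : V} {e : G.E} (h1 : G.src e = u) (h2 : G.dst e = v) :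
    G.IsPath u v [e] := by
  refine ⟨by simp, ?_, ?_, ?_⟩ <;> simp [h1, h2, List.Chain']

lemma IsPath.tail {u v : V} {e : G.E} {p : List G.E} (h : G.IsPath u v (e :: p))
    (hp : p ≠ []) : G.IsPath (G.dst e) v p := by
  obtain ⟨-, -, hlast, hchain⟩ := h
  rw [List.Chain', List.isChain_cons] at hchain
  refine ⟨hp, ?_, ?_, hchain.2⟩
  · intro g hg; exact (hchain.1 g hg).symm
  · intro g hg
    apply hlast
    cases p with
    | nil => simp at hp
    | cons a l => rw [List.getLast?_cons_cons]; exact hg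

lemma IsPath.cons {u v w : V} {e : G.E} {p : List G.E} (h : G.IsPath w v p)
    (h1 : G.src e = u) (h2 : G.dst e = w) : G.IsPath u v (e :: p) := by
  obtain ⟨hne, hhead, hlast, hchain⟩ := h
  refine ⟨by simp, by simp [h1], ?_, ?_⟩
  · intro g hg
    apply hlast
    cases p with
    | nil => simp at hne
    | cons a l => rw [List.getLast?_cons_cons] at hg; exact hg
  · rw [List.Chain', List.isChain_cons]
    exact ⟨fun g hg => (h2.trans (hhead g hg).symm), hchain⟩

/-- the suffix starting at an edge `g` of a path is a path from `src g`. -/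
lemma IsPath.suffix {u v : V} {g : G.E} {l1 l2 : List G.E}
    (h : G.IsPath u v (l1 ++ g :: l2)) : G.IsPath (G.src g) v (g :: l2) := by
  obtain ⟨-, -, hlast, hchain⟩ := h
  refine ⟨by simp, by simp, ?_, hchain.infix ⟨l1, [], by simp⟩⟩
  intro x hx
  apply hlast
  rw [List.getLast?_append]
  simp only [Option.mem_def] at hx ⊢
  rw [hx]; rfl

/-- the prefix of a path up to (just before) an edge `g` is a path to `src g`. -/
lemma IsPath.prefix {u v : V} {g : G.E} {l1 l2 : List G.E}
    (h : G.IsPath u v (l1 ++ g :: l2)) (hne : l1 ≠ []) : G.IsPath u (G.src g) l1 := by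
  obtain ⟨-, hhead, -, hchain⟩ := h
  rw [List.Chain', List.isChain_append] at hchain
  refine ⟨hne, ?_, ?_, hchain.1⟩
  · intro x hx
    apply hhead
    rw [List.head?_append, hx]; rfl
  · intro x hx
    exact hchain.2.2 x hx g rfl

/-- excising a "cycle" `g1 :: m` (returning to the same source) from a path. -/
lemma IsPath.excise {u v : V} {g1 g2 : G.E} {l1 m l2 : List G.E}
    (h : G.IsPath u v (l1 ++ g1 :: (m ++ g2 :: l2))) (hsrc : G.src g1 = G.src g2) :
    G.IsPath u v (l1 ++ g2 :: l2) := by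
  have h2 : G.IsPath (G.src g2) v (g2 :: l2) := by
    exact IsPath.suffix (l1 := l1 ++ g1 :: m) (g := g2) (l2 := l2)
      (show G.IsPath u v ((l1 ++ g1 :: m) ++ g2 :: l2) by simpa using h)
  cases l1 with
  | nil =>
      simp only [List.nil_append] at h ⊢
      have : G.src g2 = u := by rw [← hsrc]; exact h.src_head
      obtain ⟨hne, hhead, hlast, hchain⟩ := h2
      exact ⟨hne, by simpa [this] using hhead, hlast, hchain⟩
  | cons a t =>
      have hpre : G.IsPath u (G.src g1) (a :: t) := h.prefix (by simp)
      obtain ⟨hne1, hhead1, hlast1, hchain1⟩ := hpre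
      obtain ⟨hne2, hhead2, hlast2, hchain2⟩ := h2
      refine ⟨by simp, ?_, ?_, ?_⟩
      · intro x hx; apply hhead1; simpa using hx
      · intro x hx
        apply hlast2
        rw [List.getLast?_append] at hx
        simpa using hx
      · rw [List.Chain', List.isChain_append]
        refine ⟨hchain1, hchain2, ?_⟩
        intro x hx y hy
        simp only [List.head?_cons, Option.mem_def, Option.some.injEq] at hy
        subst hy
        have := hlast1 x hx
        rw [this, hsrc]

/-- truncating a path at an edge whose source is `v`. -/
lemma IsPath.truncate {u v : V} {g : G.E} {l1 l2 : List G.E}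
    (h : G.IsPath u v (l1 ++ g :: l2)) (hg : G.src g = v) (hne : l1 ≠ []) :
    G.IsPath u v l1 := by
  have := h.prefix hne
  rwa [hg] at this

/-! ### simplicity of minimal paths -/

/-- A path is simple (relative to terminal vertex `v`) if no two edges share a source
and `v` is not the source of any edge. -/
def SimpleP (G : WCEGraph V M) (v : V) (p : List G.E) : Prop :=
  (p.map G.src).Nodup ∧ v ∉ p.map G.src

private lemma exists_dup_split {α β : Type*} (f : α → β) :
    ∀ (l : List α), ¬ (l.map f).Nodup →
      ∃ l1 g1 m g2 l2, l = l1 ++ g1 :: (m ++ g2 :: l2) ∧ f g1 = f g2 := by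
  intro l
  induction l with
  | nil => intro h; simp at h
  | cons a t ih =>
      intro h
      by_cases ht : (t.map f).Nodup
      · have : f a ∈ t.map f := by
          by_contra hmem
          exact h (by simp only [List.map_cons, List.nodup_cons]; exact ⟨hmem, ht⟩)
        obtain ⟨b, hb, hfb⟩ := List.mem_map.mp this
        obtain ⟨m, l2, rfl⟩ := List.append_of_mem hb
        exact ⟨[], a, m, b, l2, by simp, hfb.symm⟩
      · obtain ⟨l1, g1, m, g2, l2, rfl, hf⟩ := ih ht
        exact ⟨a :: l1, g1, m, g2, l2, by simp, hf⟩

lemma IsMinimal.simple {u v : V} {p : List G.E} (huv : u ≠ v)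
    (h : G.IsMinimal u v p) : SimpleP G v p := by
  constructor
  · by_contra hnd
    obtain ⟨l1, g1, m, g2, l2, rfl, hsrc⟩ := exists_dup_split G.src p hnd
    have hq : G.IsPath u v (l1 ++ g2 :: l2) := h.1.excise hsrc
    have hle : G.pathLE (l1 ++ g2 :: l2) (l1 ++ g1 :: (m ++ g2 :: l2)) := by
      intro c
      simp only [colWeight_append, colWeight_cons]
      have h1 := ite_wt_nonneg (G := G) c g1
      have h2 := colWeight_nonneg (G := G) c m
      linarith
    have heq := h.2 _ hq hle (G.col g1)
    simp only [colWeight_append, colWeight_cons, eq_self_iff_true, if_true] at heq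
    have h2 := colWeight_nonneg (G := G) (G.col g1) m
    have h3 := G.wt_pos g1
    linarith
  · intro hmem
    obtain ⟨g, hg, hsrc⟩ := List.mem_map.mp hmem
    obtain ⟨l1, l2, rfl⟩ := List.append_of_mem hg
    have hne : l1 ≠ [] := by
      rintro rfl
      exact huv ((h.1.src_head).symm.trans hsrc)
    have hq : G.IsPath u v l1 := h.1.truncate hsrc hne
    have hle : G.pathLE l1 (l1 ++ g :: l2) := by
      intro c
      simp only [colWeight_append, colWeight_cons]
      have h1 := ite_wt_nonneg (G := G) c g
      have h2 := colWeight_nonneg (G := G) c l2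
      linarith
    have heq := h.2 _ hq hle (G.col g)
    simp only [colWeight_append, colWeight_cons, eq_self_iff_true, if_true] at heq
    have h2 := colWeight_nonneg (G := G) (G.col g) l2
    have h3 := G.wt_pos g
    linarith

/-! ### tails of minimal paths -/

lemma IsMinimal.tail {u v : V} {e : G.E} {p : List G.E}
    (h : G.IsMinimal u v (e :: p)) (hp : p ≠ []) : G.IsMinimal (G.dst e) v p := by
  refine ⟨h.1.tail hp, ?_⟩
  intro r hr hle c
  have hr' : G.IsPath u v (e :: r) := hr.cons h.1.src_head rfl
  have hle' : G.pathLE (e :: r) (e :: p) := by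
    intro c'
    simp only [colWeight_cons]
    have := hle c'
    linarith
  have := h.2 _ hr' hle' c
  simp only [colWeight_cons] at this
  linarith

/-! ### the crossover argument -/

/-- If `e :: ρ` is minimal from `u` and `f` is another edge out of `u` of the same
colour, no heavier than `e`, whose destination lies on the path (or is `v`) but differs
from `dst e`, we get a contradiction. -/
lemma cross {u v : V} {e f : G.E} {ρ : List G.E}
    (hp : G.IsMinimal u v (e :: ρ))
    (hfu : G.src f = u) (hcol : G.col f = G.col e) (hwt : G.wt f ≤ G.wt e)
    (hb : G.dst f ∈ ρ.map G.src ∨ G.dst f = v)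
    (hab : G.dst e ≠ G.dst f) : False := by
  rcases hb with hb | hb
  · -- dst f is the source of an edge g inside ρ : p = e :: (α ++ g :: t)
    obtain ⟨g, hgρ, hgsrc⟩ := List.mem_map.mp hb
    obtain ⟨α, t, rfl⟩ := List.append_of_mem hgρ
    have hα : α ≠ [] := by
      rintro rfl
      simp only [List.nil_append] at hp
      have : G.dst e = G.src g := by
        have := hp.1.2.2.2
        rw [List.Chain', List.isChain_cons] at this
        exact this.1 g rfl
      exact hab (this.trans hgsrc)
    -- B := f :: g :: t is a path from u to v
    have hsuf : G.IsPath (G.src g) v (g :: t) :=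
      IsPath.suffix (l1 := e :: α) (show G.IsPath u v ((e :: α) ++ g :: t) by simpa using hp.1)
    have hB : G.IsPath u v (f :: g :: t) := hsuf.cons hfu hgsrc.symm
    have hle : G.pathLE (f :: g :: t) (e :: (α ++ g :: t)) := by
      intro c
      simp only [colWeight_cons, colWeight_append]
      have h1 := ite_wt_le hcol hwt c
      have h2 := colWeight_nonneg (G := G) c α
      linarith
    -- equality in the colour of the head of α gives a contradiction
    obtain ⟨a0, α', rfl⟩ := List.exists_cons_of_ne_nil hα
    have heq := hp.2 _ hB hle (G.col a0)
    simp only [colWeight_cons, colWeight_append, eq_self_iff_true, if_true] at heq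
    have h1 := ite_wt_le hcol hwt (G.col a0)
    have h2 := colWeight_nonneg (G := G) (G.col a0) α'
    have h3 := G.wt_pos a0
    linarith
  · -- dst f = v : B := [f]
    have hB : G.IsPath u v [f] := isPath_singleton hfu hb
    have hρ : ρ ≠ [] := by
      rintro rfl
      exact hab ((hp.1.2.2.1 e rfl).trans hb.symm)
    have hle : G.pathLE [f] (e :: ρ) := by
      intro c
      simp only [colWeight_cons, colWeight_nil]
      have h1 := ite_wt_le hcol hwt c
      have h2 := colWeight_nonneg (G := G) c ρ
      linarith
    obtain ⟨a0, ρ', rfl⟩ := List.exists_cons_of_ne_nil hρ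
    have heq := hp.2 _ hB hle (G.col a0)
    simp only [colWeight_cons, colWeight_nil, eq_self_iff_true, if_true] at heq
    have h1 := ite_wt_le hcol hwt (G.col a0)
    have h2 := colWeight_nonneg (G := G) (G.col a0) ρ'
    have h3 := G.wt_pos a0
    linarith

/-! ### the outgoing-colour key -/

/-- The colour of the (first) edge of `p` leaving vertex `x`, if any. -/
noncomputable def outCol (G : WCEGraph V M) : List G.E → V → Option M
  | [], _ => none
  | e :: p, x => if G.src e = x then some (G.col e) else outCol G p x

lemma outCol_eq_none_iff (p : List G.E) (x : V) :
    outCol G p x = none ↔ x ∉ p.map G.src := by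
  induction p with
  | nil => simp [outCol]
  | cons e t ih =>
      by_cases h : G.src e = x
      · simp [outCol, h]
      · simp only [outCol, if_neg h, List.map_cons, List.mem_cons, ih]
        constructor
        · rintro hx (rfl | hx'); exact h rfl; exact hx hx'
        · intro hx; exact fun hmem => hx (Or.inr hmem)

lemma outCol_head {u : V} {e : G.E} {p : List G.E} (h : G.src e = u) :
    outCol G (e :: p) u = some (G.col e) := by simp [outCol, h]

/-- **Uniqueness**: two minimal simple paths with the same outgoing-colour key coincide. -/
lemma eq_of_outCol_eq (hone : ∀ e f : G.E,
      G.src e = G.src f → G.dst e = G.dst f → G.col e = G.col f → e = f) {v : V} :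
    ∀ (p q : List G.E) (u : V), G.IsMinimal u v p → G.IsMinimal u v q →
      SimpleP G v p → SimpleP G v q → (∀ x, outCol G p x = outCol G q x) → p = q := by
  intro p
  induction p with
  | nil => intro q u hp _ _ _ _; exact absurd rfl hp.1.1
  | cons e ρ ih =>
      intro q u hp hq hSp hSq hcol
      obtain ⟨f, σ, rfl⟩ : ∃ f σ, q = f :: σ := by
        cases q with
        | nil => exact absurd rfl hq.1.1
        | cons f σ => exact ⟨f, σ, rfl⟩
      have hue : G.src e = u := hp.1.src_head
      have huf : G.src f = u := hq.1.src_head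
      have hcolef : G.col e = G.col f := by
        have h1 := outCol_head (G := G) (p := ρ) hue
        have h2 := outCol_head (G := G) (p := σ) huf
        have := (hcol u).symm.trans h1
        rw [h2] at this
        exact (Option.some.injEq _ _ ▸ this).symm
      -- sources of p and q coincide
      have hsrcs : ∀ x, x ∈ (e :: ρ).map G.src ↔ x ∈ (f :: σ).map G.src := by
        intro x
        rw [← not_iff_not, ← outCol_eq_none_iff, ← outCol_eq_none_iff, hcol x]
      by_cases hd : G.dst e = G.dst f
      · -- same first edge; recurse on the tails
        have hef : e = f := hone e f (hue.trans huf.symm) hd hcolef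
        subst hef
        by_cases hρ : ρ = []
        · subst hρ
          have hev : G.dst e = v := hp.1.2.2.1 e rfl
          have hσ : σ = [] := by
            cases σ with
            | nil => rfl
            | cons g σ' =>
                exfalso
                have hch := hq.1.2.2.2
                rw [List.Chain', List.isChain_cons] at hch
                have : G.dst e = G.src g := hch.1 g rfl
                exact hSq.2 (List.mem_map.mpr ⟨g, by simp, by rw [← this, hev]⟩)
          rw [hσ]
        · have hσ : σ ≠ [] := by
            rintro rfl
            have hev : G.dst e = v := hq.1.2.2.1 e rfl
            obtain ⟨g, ρ', rfl⟩ := List.exists_cons_of_ne_nil hρ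
            have hch := hp.1.2.2.2
            rw [List.Chain', List.isChain_cons] at hch
            have : G.dst e = G.src g := hch.1 g rfl
            exact hSp.2 (List.mem_map.mpr ⟨g, by simp, by rw [← this, hev]⟩)
          have hu_notρ : u ∉ ρ.map G.src := by
            have := hSp.1
            simp only [List.map_cons, List.nodup_cons, hue] at this
            exact this.1
          have hu_notσ : u ∉ σ.map G.src := by
            have := hSq.1
            simp only [List.map_cons, List.nodup_cons, hue] at this
            exact this.1
          have htcol : ∀ x, outCol G ρ x = outCol G σ x := by
            intro x
            by_cases hx : x = u
            · rw [hx, (outCol_eq_none_iff (G := G) ρ u).mpr hu_notρ,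
                (outCol_eq_none_iff (G := G) σ u).mpr hu_notσ]
            · have := hcol x
              have hne : G.src e ≠ x := by rw [hue]; exact fun h => hx h.symm
              simpa only [outCol, if_neg hne] using this
          have hSρ : SimpleP G v ρ := by
            refine ⟨?_, fun hm => hSp.2 (by simp [hm])⟩
            have := hSp.1
            simp only [List.map_cons, List.nodup_cons] at this
            exact this.2
          have hSσ : SimpleP G v σ := by
            refine ⟨?_, fun hm => hSq.2 (by simp [hm])⟩
            have := hSq.1
            simp only [List.map_cons, List.nodup_cons] at this
            exact this.2
          rw [ih σ (G.dst e) (hp.tail hρ) (hq.tail hσ) hSρ hSσ htcol]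
      · -- divergence: impossible
        exfalso
        rcases le_total (G.wt f) (G.wt e) with hw | hw
        · -- use the crossover on p with f
          have hbmem : G.dst f ∈ σ.map G.src ∨ G.dst f = v := by
            cases σ with
            | nil => exact Or.inr (hq.1.2.2.1 f rfl)
            | cons g σ' =>
                left
                have hch := hq.1.2.2.2
                rw [List.Chain', List.isChain_cons] at hch
                exact List.mem_map.mpr ⟨g, by simp, (hch.1 g rfl).symm⟩
          have hb' : G.dst f ∈ ρ.map G.src ∨ G.dst f = v := by
            rcases hbmem with hm | hm
            · left
              have : G.dst f ∈ (e :: ρ).map G.src := (hsrcs _).mpr (by simp [hm])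
              simp only [List.map_cons, List.mem_cons, hue] at this
              rcases this with h' | h'
              · exact (G.no_loop f (huf.trans h'.symm)).elim
              · exact h'
            · exact Or.inr hm
          exact cross hp huf hcolef.symm hw hb' hd
        · -- use the crossover on q with e
          have hamem : G.dst e ∈ ρ.map G.src ∨ G.dst e = v := by
            cases ρ with
            | nil => exact Or.inr (hp.1.2.2.1 e rfl)
            | cons g ρ' =>
                left
                have hch := hp.1.2.2.2
                rw [List.Chain', List.isChain_cons] at hch
                exact List.mem_map.mpr ⟨g, by simp, (hch.1 g rfl).symm⟩
          have ha' : G.dst e ∈ σ.map G.src ∨ G.dst e = v := by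
            rcases hamem with hm | hm
            · left
              have : G.dst e ∈ (f :: σ).map G.src := (hsrcs _).mp (by simp [hm])
              simp only [List.map_cons, List.mem_cons, huf] at this
              rcases this with h' | h'
              · exact (G.no_loop e (hue.trans h'.symm)).elim
              · exact h'
            · exact Or.inr hm
          exact cross hq hue hcolef hw ha' (fun h => hd h.symm)

end WCEGraph

open WCEGraph

/-- In a finite weighted coloured-edge graph with `n ≥ 2` vertices and
`k` colours, having at most one edge of each colour between any ordered pair of distinct
vertices, the total number of minimal paths from one vertex `u` to another vertex `v`
is at most `k * (k + 1) ^ (n - 2)`. -/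
theorem total_minimal_paths_card_le {V M : Type} [Fintype V] [Fintype M]
    (G : WCEGraph V M) [Fintype G.E]
    (n k : ℕ) (hn : Fintype.card V = n) (hk : Fintype.card M = k) (h2 : 2 ≤ n)
    (hone : ∀ e f : G.E, G.src e = G.src f → G.dst e = G.dst f → G.col e = G.col f → e = f)
    (u v : V) (huv : u ≠ v) :
    {p : List G.E | G.IsMinimal u v p}.Finite ∧
      {p : List G.E | G.IsMinimal u v p}.ncard ≤ k * (k + 1) ^ (n - 2) := by
  classical
  by_cases hM : Nonempty M
  · haveI := hM
    let d : M := Classical.arbitrary M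
    let D := {x : V // x ∉ ({u, v} : Finset V)}
    haveI : Fintype D := Fintype.ofFinite D
    let F : List G.E → M × (D → Option M) := fun p =>
      ((p.head?.map G.col).getD d, fun x => outCol G p x.val)
    have hinj : Set.InjOn F {p : List G.E | G.IsMinimal u v p} := by
      intro p hp q hq hFeq
      have hp' : G.IsMinimal u v p := hp
      have hq' : G.IsMinimal u v q := hq
      have hSp := hp'.simple huv
      have hSq := hq'.simple huv
      have hcol : ∀ x, outCol G p x = outCol G q x := by
        intro x
        by_cases hxu : x = u
        · obtain ⟨e, ρ, rfl⟩ := List.exists_cons_of_ne_nil hp'.1.1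
          obtain ⟨f, σ, rfl⟩ := List.exists_cons_of_ne_nil hq'.1.1
          have h1 := congrArg Prod.fst hFeq
          simp only [F, List.head?_cons, Option.map_some, Option.getD_some] at h1
          rw [hxu, outCol_head hp'.1.src_head, outCol_head hq'.1.src_head, h1]
        · by_cases hxv : x = v
          · rw [hxv, (outCol_eq_none_iff _ _).mpr hSp.2, (outCol_eq_none_iff _ _).mpr hSq.2]
          · have hxD : x ∉ ({u, v} : Finset V) := by simp [hxu, hxv]
            exact congrFun (congrArg Prod.snd hFeq) ⟨x, hxD⟩
      exact eq_of_outCol_eq hone p q u hp' hq' hSp hSq hcol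
    have hfin : {p : List G.E | G.IsMinimal u v p}.Finite :=
      Set.Finite.of_finite_image (Set.toFinite _) hinj
    have hcardD : Fintype.card D = n - 2 := by
      have h2' : Fintype.card {x : V // x ∈ ({u, v} : Finset V)} = 2 := by
        rw [Fintype.card_coe]
        exact Finset.card_pair huv
      have := Fintype.card_subtype_compl (fun x : V => x ∈ ({u, v} : Finset V))
      rw [h2', hn] at this
      exact this
    have hcardT : Fintype.card (M × (D → Option M)) = k * (k + 1) ^ (n - 2) := by
      rw [Fintype.card_prod, Fintype.card_fun, Fintype.card_option, hk, hcardD]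
    refine ⟨hfin, ?_⟩
    have h1 : {p : List G.E | G.IsMinimal u v p}.ncard = (F '' {p | G.IsMinimal u v p}).ncard :=
      (Set.ncard_image_of_injOn hinj).symm
    have h2 : (F '' {p | G.IsMinimal u v p}).ncard ≤ Fintype.card (M × (D → Option M)) := by
      have := Set.ncard_le_ncard (Set.subset_univ (F '' {p | G.IsMinimal u v p}))
        Set.finite_univ
      rwa [Set.ncard_univ, Nat.card_eq_fintype_card] at this
    rw [h1, ← hcardT]
    exact h2
  · have hE : IsEmpty G.E := ⟨fun e => hM ⟨G.col e⟩⟩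
    have hempty : {p : List G.E | G.IsMinimal u v p} = ∅ := by
      ext p
      simp only [Set.mem_setOf_eq, Set.mem_empty_iff_false, iff_false]
      intro hp
      cases p with
      | nil => exact hp.1.1 rfl
      | cons e _ => exact hE.false e
    rw [hempty]
    exact ⟨Set.finite_empty, by simp⟩
end

section
/- Let n ≥ 2 and let G be the weighted coloured-edge chain with vertices v₁, …, v_n and k colours in which, for each i with 1 ≤ i ≤ n−1 and each colour c, there is exactly one edge from v_i to v_{i+1} of colour c with weight 2^(i−1), and there are no other edges. Then the k^(n−1) paths from v₁ to v_n are pairwise incomparable, and hence all k^(n−1) of them are minimal; in particular the bound k^(n−1) on a set of pairwise incomparable minimal paths is attained. -/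
open Classical

/-- The chain with vertices `v₁, …, v_n` (represented by `Fin n`, so `v_i` is `i - 1`)
and `k` colours, in which for each `1 ≤ i ≤ n - 1` and each colour `c` there is exactly
one edge from `v_i` to `v_{i+1}` of colour `c`, with weight `2 ^ (i - 1)`. -/
noncomputable def chainGraph (n k : ℕ) (hn : 2 ≤ n) : WCEGraph (Fin n) (Fin k) where
  E := Fin (n - 1) × Fin k
  src e := e.1.castLE (Nat.sub_le n 1)
  dst e := ⟨e.1.1 + 1, by omega⟩
  wt e := 2 ^ e.1.1
  col e := e.2
  wt_pos e := by positivity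
  no_loop e := by
    intro h
    have h' := congrArg Fin.val h
    simp only [Fin.coe_castLE] at h'
    omega
  col_surj c := ⟨(⟨0, by omega⟩, c), rfl⟩

/-- The path of colour pattern `f`. -/
def chainPath (n k : ℕ) (f : Fin (n - 1) → Fin k) : List (Fin (n - 1) × Fin k) :=
  List.ofFn (fun j => (j, f j))

theorem chainPath_isPath (n k : ℕ) (hn : 2 ≤ n) (f : Fin (n - 1) → Fin k) :
    (chainGraph n k hn).IsPath ⟨0, by linarith⟩ ⟨n - 1, Nat.sub_lt (by linarith) one_pos⟩ (chainPath n k f) := by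
  have hlen : (chainPath n k f).length = n - 1 := by simp [chainPath]
  have hne : chainPath n k f ≠ [] := by
    intro h; rw [h] at hlen; simp at hlen; omega
  refine ⟨hne, ?_, ?_, ?_⟩
  · intro e he
    rw [List.head?_eq_head (α := (chainGraph n k hn).E) hne] at he
    simp only [Option.mem_def, Option.some.injEq] at he
    subst he
    erw [(List.getElem_zero (by omega) : (chainPath n k f)[0]'(by omega) = (chainPath n k f).head hne).symm]
    simp only [chainPath, List.getElem_ofFn]
    apply Fin.ext
    simp [chainGraph]
  · intro e he
    rw [List.getLast?_eq_getLast (α := (chainGraph n k hn).E) hne] at he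
    simp only [Option.mem_def, Option.some.injEq] at he
    subst he
    erw [List.getLast_eq_getElem]
    simp only [chainPath, List.getElem_ofFn]
    apply Fin.ext
    simp only [chainGraph, hlen]
    simp [hlen, chainPath]
    omega
  · unfold List.Chain'
    erw [List.isChain_iff_getElem]
    intro i hi
    simp only [chainPath, List.get_eq_getElem, List.getElem_ofFn]
    apply Fin.ext
    simp [chainGraph]
    erw [List.getElem_ofFn, List.getElem_ofFn]

theorem isPath_eq_chainPath (n k : ℕ) (hn : 2 ≤ n) (p : List ((chainGraph n k hn).E))
    (hp : (chainGraph n k hn).IsPath ⟨0, by linarith⟩ ⟨n - 1, Nat.sub_lt (by linarith) one_pos⟩ p) :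
    ∃ f : Fin (n - 1) → Fin k, p = chainPath n k f := by
  obtain ⟨hne, hhead, hlast, hchain⟩ := hp
  simp only [List.Chain', List.isChain_iff_getElem] at hchain
  -- indices increase by one
  have hidx : ∀ i (h : i < p.length), (p[i]'h).1.1 = i := by
    intro i
    induction i with
    | zero =>
      intro h
      have := hhead (p.head hne) (List.head?_eq_head hne)
      have h0 : p.head hne = p[0]'h := (List.getElem_zero _).symm
      rw [h0] at this
      have := congrArg Fin.val this
      simpa [chainGraph] using this
    | succ i ih =>
      intro h
      have hi : i + 1 < p.length := by omega
      have := hchain i hi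
      have := congrArg Fin.val this
      simp only [chainGraph, List.get_eq_getElem, Fin.coe_castLE] at this
      have hprev := ih (by omega)
      exact this.symm.trans (congrArg (· + 1) hprev)
  have hlen : p.length = n - 1 := by
    have := hlast (p.getLast hne) (List.getLast?_eq_getLast hne)
    rw [List.getLast_eq_getElem] at this
    have h2 := congrArg Fin.val this
    simp only [chainGraph] at h2
    have h3 := hidx (p.length - 1) (by
      have : p.length ≠ 0 := fun h => hne (List.length_eq_zero_iff.mp h)
      omega)
    have : p.length ≠ 0 := fun h => hne (List.length_eq_zero_iff.mp h)
    have h4 : (p[p.length - 1]'(by omega)).1.1 + 1 = n - 1 := h2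
    omega
  refine ⟨fun j => (p[j.1]'(by omega)).2, ?_⟩
  apply List.ext_getElem
  · simp [chainPath, hlen]
    exact List.length_ofFn.symm
  · intro i h1 h2
    simp only [chainPath, List.getElem_ofFn]
    erw [List.getElem_ofFn]
    exact Prod.ext (Fin.ext (hidx i h1)) rfl

theorem colWeight_chainPath (n k : ℕ) (hn : 2 ≤ n) (c : Fin k) (f : Fin (n - 1) → Fin k) :
    (chainGraph n k hn).colWeight c (chainPath n k f) =
      ((∑ j ∈ Finset.univ.filter (fun j : Fin (n - 1) => f j = c), 2 ^ (j : ℕ) : ℕ) : ℝ) := by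
  unfold WCEGraph.colWeight chainPath
  erw [List.map_ofFn, List.sum_ofFn]
  rw [Finset.sum_filter]
  push_cast
  refine Finset.sum_congr rfl fun j _ => ?_
  erw [Function.comp_apply]
  by_cases h : f j = c
  · rw [if_pos (show (chainGraph n k hn).col (j, f j) = c from h), if_pos h]
    rfl
  · rw [if_neg (show ¬(chainGraph n k hn).col (j, f j) = c from h), if_neg h]

/-- Key: domination forces equal weights in every colour. -/
theorem chainPath_le_eq (n k : ℕ) (hn : 2 ≤ n) (f g : Fin (n - 1) → Fin k)
    (h : (chainGraph n k hn).pathLE (chainPath n k f) (chainPath n k g)) :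
    ∀ c : Fin k, (chainGraph n k hn).colWeight c (chainPath n k f)
      = (chainGraph n k hn).colWeight c (chainPath n k g) := by
  have total : ∀ h' : Fin (n - 1) → Fin k,
      ∑ c : Fin k, (chainGraph n k hn).colWeight c (chainPath n k h')
        = ∑ j : Fin (n - 1), ((2 : ℝ) ^ (j : ℕ)) := by
    intro h'
    simp only [colWeight_chainPath, Finset.sum_filter]
    push_cast
    rw [Finset.sum_comm]
    apply Finset.sum_congr rfl
    intro j _
    rw [Finset.sum_ite_eq Finset.univ (h' j) (fun _ => (2:ℝ) ^ (j:ℕ))]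
    simp
  have hsum : ∑ c : Fin k, (chainGraph n k hn).colWeight c (chainPath n k f)
      = ∑ c : Fin k, (chainGraph n k hn).colWeight c (chainPath n k g) := by
    rw [total f, total g]
  exact fun c => (Finset.sum_eq_sum_iff_of_le (fun c _ => h c)).mp hsum c (Finset.mem_univ c)

theorem chainPath_weights_eq_imp (n k : ℕ) (hn : 2 ≤ n) (f g : Fin (n - 1) → Fin k)
    (h : ∀ c : Fin k, (chainGraph n k hn).colWeight c (chainPath n k f)
      = (chainGraph n k hn).colWeight c (chainPath n k g)) : f = g := by
  have hset : ∀ c, Finset.univ.filter (fun j : Fin (n - 1) => f j = c)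
      = Finset.univ.filter (fun j : Fin (n - 1) => g j = c) := by
    intro c
    have := h c
    rw [colWeight_chainPath, colWeight_chainPath, Nat.cast_inj] at this
    -- transfer to Finset ℕ
    have himg : (Finset.univ.filter (fun j : Fin (n - 1) => f j = c)).image Fin.val
        = (Finset.univ.filter (fun j : Fin (n - 1) => g j = c)).image Fin.val := by
      apply Finset.geomSum_injective (le_refl 2)
      show (∑ i ∈ _, 2 ^ i) = (∑ i ∈ _, 2 ^ i)
      rw [Finset.sum_image (fun a _ b _ h => Fin.val_injective h),
        Finset.sum_image (fun a _ b _ h => Fin.val_injective h)]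
      exact this
    exact Finset.image_injective Fin.val_injective himg
  funext j
  have := hset (f j)
  have hj : j ∈ Finset.univ.filter (fun j' : Fin (n - 1) => f j' = f j) := by simp
  rw [this] at hj
  exact (Finset.mem_filter.mp hj).2.symm

/-- In the chain with `n ≥ 2` vertices and `k` colours whose three
parallel edges from `v_i` to `v_{i+1}` (one per colour) all have weight `2 ^ (i - 1)`,
the paths from `v₁` to `v_n` are pairwise incomparable, hence all minimal, and there
are exactly `k ^ (n - 1)` of them: the bound `k ^ (n - 1)` is attained. -/
theorem chainGraph_all_paths_minimal (n k : ℕ) (hn : 2 ≤ n) :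
    (∀ p ∈ {p : List (chainGraph n k hn).E |
        (chainGraph n k hn).IsPath ⟨0, by omega⟩ ⟨n - 1, by omega⟩ p},
      ∀ q ∈ {p : List (chainGraph n k hn).E |
        (chainGraph n k hn).IsPath ⟨0, by omega⟩ ⟨n - 1, by omega⟩ p},
      p ≠ q → ¬ (chainGraph n k hn).pathLE p q ∧ ¬ (chainGraph n k hn).pathLE q p) ∧
    (∀ p ∈ {p : List (chainGraph n k hn).E |
        (chainGraph n k hn).IsPath ⟨0, by omega⟩ ⟨n - 1, by omega⟩ p},
      (chainGraph n k hn).IsMinimal ⟨0, by omega⟩ ⟨n - 1, by omega⟩ p) ∧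
    {p : List (chainGraph n k hn).E |
        (chainGraph n k hn).IsPath ⟨0, by omega⟩ ⟨n - 1, by omega⟩ p}.Finite ∧
    {p : List (chainGraph n k hn).E |
        (chainGraph n k hn).IsPath ⟨0, by omega⟩ ⟨n - 1, by omega⟩ p}.ncard
      = k ^ (n - 1) := by
  have hrange : {p : List (chainGraph n k hn).E |
      (chainGraph n k hn).IsPath ⟨0, by omega⟩ ⟨n - 1, by omega⟩ p}
      = Set.range (chainPath n k) := by
    ext p
    constructor
    · intro hp
      obtain ⟨f, rfl⟩ := isPath_eq_chainPath n k hn p hp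
      exact ⟨f, rfl⟩
    · rintro ⟨f, rfl⟩
      exact chainPath_isPath n k hn f
  have hinj : Function.Injective (chainPath n k) := by
    intro f g hfg
    apply chainPath_weights_eq_imp n k hn
    intro c; rw [hfg]
  refine ⟨?_, ?_, ?_, ?_⟩
  · intro p hp q hq hne
    obtain ⟨f, rfl⟩ := isPath_eq_chainPath n k hn p hp
    obtain ⟨g, rfl⟩ := isPath_eq_chainPath n k hn q hq
    have hfg : f ≠ g := fun h => hne (by rw [h])
    constructor
    · intro hle
      exact hfg (chainPath_weights_eq_imp n k hn f g (chainPath_le_eq n k hn f g hle))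
    · intro hle
      exact hfg ((chainPath_weights_eq_imp n k hn g f (chainPath_le_eq n k hn g f hle)).symm)
  · intro p hp
    refine ⟨hp, fun q hq hle c => ?_⟩
    obtain ⟨f, rfl⟩ := isPath_eq_chainPath n k hn p hp
    obtain ⟨g, rfl⟩ := isPath_eq_chainPath n k hn q hq
    exact chainPath_le_eq n k hn g f hle c
  · rw [hrange]
    exact Set.finite_range _
  · erw [hrange, ← Nat.card_coe_set_eq, Nat.card_range_of_injective hinj,
      Nat.card_eq_fintype_card]
    simp
end

section
/- In a canonical weighted coloured-edge graph G, for every pair of distinct vertices x and y and every colour c, the single-edge path consisting of the colour-c edge from x to y is a minimal path from x to y. -/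
open Classical

namespace WCEGraph

/-- A weighted coloured-edge graph is canonical if it is complete in each colour
(for all distinct vertices `x ≠ y` and every colour `c` there is exactly one edge from
`x` to `y` of colour `c`) and satisfies the triangle inequality in each colour
(for all distinct vertices `x, y, z` and colour `c`, the colour-`c` edges `e : x → y`,
`f : y → z`, `g : x → z` satisfy `ω(g) ≤ ω(e) + ω(f)`). -/
def Canonical {V M : Type} (G : WCEGraph V M) : Prop :=
  (∀ x y : V, x ≠ y → ∀ c : M,
      ∃! e : G.E, G.src e = x ∧ G.dst e = y ∧ G.col e = c) ∧
  (∀ e f g : G.E,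
      G.src e ≠ G.dst e → G.src f ≠ G.dst f → G.src e ≠ G.dst f →
      G.dst e = G.src f → G.src g = G.src e → G.dst g = G.dst f →
      G.col e = G.col f → G.col e = G.col g →
      G.wt g ≤ G.wt e + G.wt f)

end WCEGraph

/-- Auxiliary: for a monochromatic path between distinct vertices, the weight of the
canonical edge is at most the total weight of the path. -/
theorem mono_path_wt_le {V M : Type} (G : WCEGraph V M) (hG : G.Canonical) (c : M) :
    ∀ q : List G.E, ∀ u v : V, u ≠ v → G.IsPath u v q →
      (∀ a ∈ q, G.col a = c) → ∀ g, G.src g = u → G.dst g = v → G.col g = c →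
      G.wt g ≤ (q.map G.wt).sum := by
  intro q
  induction q with
  | nil => intro u v _ hp; exact absurd rfl hp.1
  | cons a rest ih =>
    intro u v huv hp hcol g hgs hgd hgc
    obtain ⟨-, hhead, hlast, hchain⟩ := hp
    have hsa : G.src a = u := hhead a rfl
    have hca : G.col a = c := hcol a List.mem_cons_self
    have hnonneg : 0 ≤ (rest.map G.wt).sum := by
      apply List.sum_nonneg
      intro x hx
      obtain ⟨b, _, rfl⟩ := List.mem_map.mp hx
      exact le_of_lt (G.wt_pos b)
    cases rest with
    | nil =>
      have hda : G.dst a = v := hlast a rfl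
      obtain ⟨e0, _, huniq⟩ := hG.1 u v huv c
      have h1 : a = e0 := huniq a ⟨hsa, hda, hca⟩
      have h2 : g = e0 := huniq g ⟨hgs, hgd, hgc⟩
      simp [h1, h2]
    | cons b rest' =>
      have hch := List.isChain_cons_cons.mp hchain
      have hsb : G.src b = G.dst a := hch.1.symm
      have hrestpath : ∀ w, G.dst a = w → G.IsPath w v (b :: rest') := by
        intro w hw
        refine ⟨List.cons_ne_nil _ _, ?_, ?_, hch.2⟩
        · intro e' he'
          simp at he'
          rw [← he', hsb, hw]
        · intro e' he'
          apply hlast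
          rwa [List.getLast?_cons_cons]
      by_cases hwv : G.dst a = v
      · obtain ⟨e0, _, huniq⟩ := hG.1 u v huv c
        have h1 : a = e0 := huniq a ⟨hsa, hwv, hca⟩
        have h2 : g = e0 := huniq g ⟨hgs, hgd, hgc⟩
        simp only [List.map_cons, List.sum_cons]
        have : G.wt g = G.wt a := by rw [h1, h2]
        simp only [List.map_cons, List.sum_cons] at hnonneg
        linarith
      · -- dst a ≠ v : use the canonical edge from dst a to v and induction
        obtain ⟨g', ⟨hg's, hg'd, hg'c⟩, _⟩ := hG.1 (G.dst a) v hwv c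
        have hIH : G.wt g' ≤ ((b :: rest').map G.wt).sum :=
          ih (G.dst a) v hwv (hrestpath _ rfl)
            (fun x hx => hcol x (List.mem_cons_of_mem _ hx)) g' hg's hg'd hg'c
        have htri : G.wt g ≤ G.wt a + G.wt g' := by
          apply hG.2 a g' g (G.no_loop a) (G.no_loop g')
          · rw [hsa, hg'd]; exact huv
          · exact hg's.symm
          · rw [hgs, hsa]
          · rw [hgd, hg'd]
          · rw [hca, hg'c]
          · rw [hca, hgc]
        simp only [List.map_cons, List.sum_cons] at hIH ⊢
        linarith
    
/-- In a canonical weighted coloured-edge graph, for all distinct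
vertices `x ≠ y` and every colour `c`, the single-edge path consisting of the
colour-`c` edge from `x` to `y` is a minimal path from `x` to `y`. -/
theorem canonical_edge_isMinimal {V M : Type} (G : WCEGraph V M)
    (hG : G.Canonical) (x y : V) (hxy : x ≠ y) (c : M) (e : G.E)
    (hsrc : G.src e = x) (hdst : G.dst e = y) (hcol : G.col e = c) :
    G.IsMinimal x y [e] := by
  constructor
  · refine ⟨List.cons_ne_nil _ _, ?_, ?_, List.isChain_singleton _⟩
    · intro e' he'; simp at he'; rw [← he', hsrc]
    · intro e' he'; simp at he'; rw [← he', hdst]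
  · intro q hq hle d
    -- every edge of q has colour c
    have hmono : ∀ a ∈ q, G.col a = c := by
      intro a ha
      by_contra hne
      have h0 : G.colWeight (G.col a) [e] = 0 := by
        simp [WCEGraph.colWeight, hcol]
        intro h; exact absurd h.symm hne
      have hpos : 0 < G.colWeight (G.col a) q := by
        have h1 : G.wt a ≤ G.colWeight (G.col a) q := by
          have hmem : G.wt a ∈ q.map (fun e' => if G.col e' = G.col a then G.wt e' else 0) :=
            List.mem_map.mpr ⟨a, ha, by simp⟩
          have hnn : ∀ x ∈ q.map (fun e' => if G.col e' = G.col a then G.wt e' else 0), (0:ℝ) ≤ x := by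
            intro x hx
            obtain ⟨b, _, rfl⟩ := List.mem_map.mp hx
            split <;> [exact le_of_lt (G.wt_pos b); exact le_rfl]
          exact List.single_le_sum hnn _ hmem
        exact lt_of_lt_of_le (G.wt_pos a) h1
      have := hle (G.col a)
      rw [h0] at this
      linarith
    have hwce : G.colWeight c [e] = G.wt e := by simp [WCEGraph.colWeight, hcol]
    have hwq : G.colWeight c q = (q.map G.wt).sum := by
      unfold WCEGraph.colWeight
      congr 1
      exact List.map_congr_left (fun a ha => by rw [hmono a ha, if_pos rfl])
    by_cases hdc : d = c
    · subst hdc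
      have hge : G.wt e ≤ G.colWeight d q := by
        rw [hwq]
        exact mono_path_wt_le G hG d q x y hxy hq hmono e hsrc hdst hcol
      have hle' := hle d
      rw [hwce] at hle' ⊢
      linarith
    · have h1 : G.colWeight d q = 0 := by
        unfold WCEGraph.colWeight
        apply List.sum_eq_zero
        intro x hx
        obtain ⟨a, ha, rfl⟩ := List.mem_map.mp hx
        rw [if_neg (by rw [hmono a ha]; exact fun h => hdc h.symm)]
      have h2 : G.colWeight d [e] = 0 := by
        simp [WCEGraph.colWeight, hcol]
        intro h; exact absurd h.symm hdc
      rw [h1, h2]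
end

section
/- Let G be a finite weighted bicoloured-edge graph with colours {red, green}, let u, v be vertices of G such that there exists a path from u to v using only green edges, let e be a red edge of G, and suppose the weight ω(e) is a random variable with probability density function f_e : (0,∞) → [0, φ_e] bounded above by φ_e > 0, while all other edge weights are fixed. Then for every r ≥ 0 and every ε ≥ 0, if Δ_e(r) < ∞ then ℙ(r < Δ_e(r) ≤ r + ε) ≤ φ_e · ε. -/
open Classical MeasureTheory ProbabilityTheory

/-- The combinatorial data of a weighted bicoloured-edge graph: a directed multigraph
with vertex set `V` and edge type `E` (no self-loops), each edge being either red
(`red e = true`) or green (`red e = false`).  The (strictly positive) edge weights,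
which in this section may be random, are supplied separately as functions `w : E → ℝ`. -/
structure BiGraph (V : Type) where
  E : Type
  src : E → V
  dst : E → V
  red : E → Bool
  no_loop : ∀ e, src e ≠ dst e

namespace BiGraph

variable {V : Type} (G : BiGraph V)

/-- `p` is a path from `u` to `v`: a nonempty finite sequence of edges, each edge's
terminal vertex being the next edge's initial vertex, starting at `u` and ending at `v`. -/
def IsPath (u v : V) (p : List G.E) : Prop :=
  p ≠ [] ∧ (∀ e ∈ p.head?, G.src e = u) ∧ (∀ e ∈ p.getLast?, G.dst e = v) ∧
    p.Chain' (fun a b => G.dst a = G.src b)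

/-- `ω_red(p)`: the sum of the weights of the red edges of `p`, for weights `w`. -/
def redW (w : G.E → ℝ) (p : List G.E) : ℝ :=
  (p.map (fun e => if G.red e then w e else 0)).sum

/-- `ω_green(p)`: the sum of the weights of the green edges of `p`, for weights `w`. -/
def greenW (w : G.E → ℝ) (p : List G.E) : ℝ :=
  (p.map (fun e => if G.red e then 0 else w e)).sum

/-- `p` is a minimal path from `u` to `v` (w.r.t. weights `w`): every path `q` from `u`
to `v` with `ω_red(q) ≤ ω_red(p)` and `ω_green(q) ≤ ω_green(p)` has the same red and
green weights as `p`. -/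
def Minimal (w : G.E → ℝ) (u v : V) (p : List G.E) : Prop :=
  G.IsPath u v p ∧ ∀ q, G.IsPath u v q →
    G.redW w q ≤ G.redW w p → G.greenW w q ≤ G.greenW w p →
    G.redW w q = G.redW w p ∧ G.greenW w q = G.greenW w p

/-- `g_r`: the least green weight of a path from `u` to `v` that avoids the edge `e`
and has red weight at most `r`. -/
noncomputable def gVal (w : G.E → ℝ) (u v : V) (e : G.E) (r : ℝ) : ℝ :=
  sInf (G.greenW w '' {p | G.IsPath u v p ∧ e ∉ p ∧ G.redW w p ≤ r})

/-- The set of paths from `u` to `v` through the edge `e` whose green weight is less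
than `g_r`; the set over whose red weights `Δ_e(r)` is the infimum.  `Δ_e(r) = ∞`
corresponds to this set being empty. -/
def DeltaESet (w : G.E → ℝ) (u v : V) (e : G.E) (r : ℝ) : Set (List G.E) :=
  {q | G.IsPath u v q ∧ e ∈ q ∧ G.greenW w q < G.gVal w u v e r}

/-- `Δ_e(r)`: the least red weight of a path from `u` to `v` through `e` with green
weight less than `g_r`. -/
noncomputable def DeltaE (w : G.E → ℝ) (u v : V) (e : G.E) (r : ℝ) : ℝ :=
  sInf (G.redW w '' G.DeltaESet w u v e r)

/-- `r_tot`: the least red weight of a pure red path from `u` to `v`. -/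
noncomputable def rtot (w : G.E → ℝ) (u v : V) : ℝ :=
  sInf (G.redW w '' {p | G.IsPath u v p ∧ ∀ e ∈ p, G.red e = true})

/-- `Δ(r)`: the least red weight of a minimal path from `u` to `v` whose red weight
exceeds `r`. -/
noncomputable def Delta (w : G.E → ℝ) (u v : V) (r : ℝ) : ℝ :=
  sInf (G.redW w '' {q | G.Minimal w u v q ∧ r < G.redW w q})

end BiGraph

namespace BiGraph
variable {V : Type} (G : BiGraph V)

lemma greenW_update (e : G.E) (he : G.red e = true) (w₀ : G.E → ℝ) (x : ℝ) (p : List G.E) :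
    G.greenW (Function.update w₀ e x) p = G.greenW w₀ p := by
  unfold greenW
  congr 1
  apply List.map_congr_left
  intro a _
  by_cases h : a = e
  · subst h; simp [he]
  · simp [Function.update_of_ne h]

lemma redW_update_not_mem (e : G.E) (w₀ : G.E → ℝ) (x : ℝ) (p : List G.E) (hp : e ∉ p) :
    G.redW (Function.update w₀ e x) p = G.redW w₀ p := by
  unfold redW
  congr 1
  apply List.map_congr_left
  intro a ha
  have h : a ≠ e := fun h => hp (h ▸ ha)
  simp [Function.update_of_ne h]

lemma redW_update_mono (e : G.E) (w₀ : G.E → ℝ) {x y : ℝ} (hxy : x ≤ y) (p : List G.E) :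
    G.redW (Function.update w₀ e x) p ≤ G.redW (Function.update w₀ e y) p := by
  induction p with
  | nil => simp [redW]
  | cons a q ih =>
    simp only [redW, List.map_cons, List.sum_cons] at *
    gcongr
    by_cases h : a = e
    · subst h; simp only [Function.update_self]; split <;> simp [hxy]
    · simp [Function.update_of_ne h]

lemma redW_update_gain (e : G.E) (he : G.red e = true) (w₀ : G.E → ℝ) {x y : ℝ}
    (hxy : x ≤ y) (p : List G.E) (hp : e ∈ p) :
    G.redW (Function.update w₀ e x) p + (y - x) ≤ G.redW (Function.update w₀ e y) p := by
  induction p with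
  | nil => simp at hp
  | cons a q ih =>
    simp only [redW, List.map_cons, List.sum_cons] at *
    by_cases h : a = e
    · subst h
      have := G.redW_update_mono a w₀ hxy q
      simp only [redW] at this
      simp only [Function.update_self, he, if_true]
      linarith
    · rcases List.mem_cons.mp hp with h' | h'
      · exact absurd h'.symm h
      · have := ih h'
        simp [Function.update_of_ne h]
        linarith [this]

lemma gVal_update (u v : V) (e : G.E) (he : G.red e = true) (w₀ : G.E → ℝ) (x r : ℝ) :
    G.gVal (Function.update w₀ e x) u v e r = G.gVal w₀ u v e r := by
  unfold gVal
  congr 1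
  ext g
  constructor
  · rintro ⟨p, ⟨h1, h2, h3⟩, rfl⟩
    exact ⟨p, ⟨h1, h2, by rwa [G.redW_update_not_mem e w₀ x p h2] at h3⟩,
      (G.greenW_update e he w₀ x p).symm⟩
  · rintro ⟨p, ⟨h1, h2, h3⟩, rfl⟩
    exact ⟨p, ⟨h1, h2, by rwa [G.redW_update_not_mem e w₀ x p h2]⟩,
      G.greenW_update e he w₀ x p⟩

lemma DeltaESet_update (u v : V) (e : G.E) (he : G.red e = true) (w₀ : G.E → ℝ) (x r : ℝ) :
    G.DeltaESet (Function.update w₀ e x) u v e r = G.DeltaESet w₀ u v e r := by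
  unfold DeltaESet
  ext q
  simp only [Set.mem_setOf_eq, G.greenW_update e he w₀ x, G.gVal_update u v e he w₀ x r]

end BiGraph

/-- **Lemma 3.** Let `G` be a finite weighted bicoloured-edge graph with
a pure green path from `u` to `v`, and let `e` be a red edge whose weight is a random
variable `X` with probability density `f` supported on `(0,∞)` and bounded by `φ`, all
other edge weights being fixed (given by `w₀`).  If `Δ_e(r) < ∞` then for `r ≥ 0` and
`ε ≥ 0`, `ℙ(r < Δ_e(r) ≤ r + ε) ≤ φ · ε`. -/
theorem prob_DeltaE_mem_le {V : Type} [Fintype V] (G : BiGraph V) [Fintype G.E]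
    (u v : V) (e : G.E) (he : G.red e = true)
    (w₀ : G.E → ℝ) (hw₀ : ∀ e' : G.E, e' ≠ e → 0 < w₀ e')
    (hgreen : ∃ p : List G.E, G.IsPath u v p ∧ ∀ e' ∈ p, G.red e' = false)
    {Ω : Type} [MeasurableSpace Ω] (μ : MeasureTheory.Measure Ω) [IsProbabilityMeasure μ]
    (X : Ω → ℝ) (hX : Measurable X)
    (φ : ℝ) (hφ : 0 < φ) (f : ℝ → ℝ)
    (hf_nonneg : ∀ x, 0 ≤ f x) (hf_le : ∀ x, f x ≤ φ) (hf_supp : ∀ x ≤ 0, f x = 0)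
    (hf_pdf : ∀ s : Set ℝ, MeasurableSet s → μ (X ⁻¹' s) = ENNReal.ofReal (∫ x in s, f x))
    (r ε : ℝ) (hr : 0 ≤ r) (hε : 0 ≤ ε)
    (hfin : (G.DeltaESet w₀ u v e r).Nonempty) :
    μ {ω : Ω | r < G.DeltaE (Function.update w₀ e (X ω)) u v e r ∧
        G.DeltaE (Function.update w₀ e (X ω)) u v e r ≤ r + ε} ≤
      ENNReal.ofReal (φ * ε) := by
  set D : ℝ → ℝ := fun x => G.DeltaE (Function.update w₀ e x) u v e r with hD
  set B : Set ℝ := {x | r < D x ∧ D x ≤ r + ε} with hB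
  have hS : ∀ x : ℝ, G.DeltaESet (Function.update w₀ e x) u v e r = G.DeltaESet w₀ u v e r :=
    fun x => G.DeltaESet_update u v e he w₀ x r
  -- the key "slope ≥ 1" property
  have key : ∀ x y : ℝ, x ∈ B → y ∈ B → x ≤ y → y - x ≤ ε := by
    intro x y hx hy hxy
    have hDx : r < D x := hx.1
    have hxset : G.redW (Function.update w₀ e x) '' G.DeltaESet (Function.update w₀ e x) u v e r
        = G.redW (Function.update w₀ e x) '' G.DeltaESet w₀ u v e r := by rw [hS]
    have hne : (G.redW (Function.update w₀ e x) '' G.DeltaESet w₀ u v e r).Nonempty :=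
      hfin.image _
    have hbdd : BddBelow (G.redW (Function.update w₀ e x) '' G.DeltaESet w₀ u v e r) := by
      by_contra h
      have h0 : D x = 0 := by
        simp only [hD, BiGraph.DeltaE, hxset]
        exact Real.sInf_of_not_bddBelow h
      linarith
    have hDxle : ∀ q ∈ G.DeltaESet w₀ u v e r, D x ≤ G.redW (Function.update w₀ e x) q := by
      intro q hq
      have : D x = sInf (G.redW (Function.update w₀ e x) '' G.DeltaESet w₀ u v e r) := by
        simp only [hD, BiGraph.DeltaE, hxset]
      rw [this]
      exact csInf_le hbdd ⟨q, hq, rfl⟩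
    have hDy : D x + (y - x) ≤ D y := by
      have hyset : D y = sInf (G.redW (Function.update w₀ e y) '' G.DeltaESet w₀ u v e r) := by
        simp only [hD, BiGraph.DeltaE, hS]
      rw [hyset]
      apply le_csInf (hfin.image _)
      rintro z ⟨q, hq, rfl⟩
      have h1 : D x ≤ G.redW (Function.update w₀ e x) q := hDxle q hq
      have h2 := G.redW_update_gain e he w₀ hxy q hq.2.1
      linarith
    have := hy.2
    linarith
  have hevent : {ω : Ω | r < G.DeltaE (Function.update w₀ e (X ω)) u v e r ∧
      G.DeltaE (Function.update w₀ e (X ω)) u v e r ≤ r + ε} = X ⁻¹' B := rfl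
  rw [hevent]
  rcases B.eq_empty_or_nonempty with hBe | ⟨x₀, hx₀⟩
  · rw [hBe]
    simp only [Set.preimage_empty, measure_empty]
    exact zero_le
  · have hbddB : BddBelow B := by
      refine ⟨x₀ - ε, fun x hx => ?_⟩
      by_cases h : x ≤ x₀
      · linarith [key x x₀ hx hx₀ h]
      · linarith
    set a := sInf B with ha
    have hsub : B ⊆ Set.Icc a (a + ε) := by
      intro x hx
      refine ⟨csInf_le hbddB hx, ?_⟩
      have : x - ε ≤ a := by
        apply le_csInf ⟨x₀, hx₀⟩
        intro y hy
        by_cases h : y ≤ x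
        · linarith [key y x hy hx h]
        · linarith
      linarith
    calc μ (X ⁻¹' B) ≤ μ (X ⁻¹' Set.Icc a (a + ε)) := measure_mono (Set.preimage_mono hsub)
      _ = ENNReal.ofReal (∫ x in Set.Icc a (a + ε), f x) := hf_pdf _ measurableSet_Icc
      _ ≤ ENNReal.ofReal (φ * ε) := by
          apply ENNReal.ofReal_le_ofReal
          by_cases hint : MeasureTheory.IntegrableOn f (Set.Icc a (a + ε)) volume
          · calc ∫ x in Set.Icc a (a + ε), f x
                ≤ ∫ _x in Set.Icc a (a + ε), φ := by
                  apply MeasureTheory.setIntegral_mono_on hint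
                    (MeasureTheory.integrableOn_const (by
                      rw [Real.volume_Icc]; exact ENNReal.ofReal_ne_top))
                    measurableSet_Icc
                  intro x _; exact hf_le x
              _ = (volume (Set.Icc a (a + ε))).toReal * φ := by
                  rw [MeasureTheory.setIntegral_const, smul_eq_mul]; rfl
              _ = φ * ε := by
                  rw [Real.volume_Icc]
                  simp only [add_sub_cancel_left]
                  rw [ENNReal.toReal_ofReal hε]
                  ring
          · rw [MeasureTheory.integral_undef hint]
            positivity
end

section
/- Let G be a finite weighted bicoloured-edge graph with colours {red, green}, and let u, v be vertices of G such that there exists a path from u to v using only green edges and a path from u to v using only red edges; let r_tot be the least red weight of a pure red path from u to v. Then for every r with 0 ≤ r < r_tot there exists a red edge e of G such that Δ(r) = Δ_e(r). -/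
open Classical MeasureTheory ProbabilityTheory

namespace BiGraph

variable {V : Type} (G : BiGraph V) (w : G.E → ℝ)

lemma redW_nonneg (hw : ∀ e : G.E, 0 < w e) (p : List G.E) : 0 ≤ G.redW w p := by
  refine List.sum_nonneg ?_
  intro x hx
  simp only [List.mem_map] at hx
  obtain ⟨e, -, rfl⟩ := hx
  split <;> [exact (hw e).le; rfl]

lemma greenW_nonneg (hw : ∀ e : G.E, 0 < w e) (p : List G.E) : 0 ≤ G.greenW w p := by
  refine List.sum_nonneg ?_
  intro x hx
  simp only [List.mem_map] at hx
  obtain ⟨e, -, rfl⟩ := hx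
  split <;> [rfl; exact (hw e).le]

lemma redW_append (x y : List G.E) : G.redW w (x ++ y) = G.redW w x + G.redW w y := by
  simp [redW]

lemma greenW_append (x y : List G.E) : G.greenW w (x ++ y) = G.greenW w x + G.greenW w y := by
  simp [greenW]

lemma redW_cons (e : G.E) (y : List G.E) :
    G.redW w (e :: y) = (if G.red e then w e else 0) + G.redW w y := by
  simp [redW]

lemma greenW_cons (e : G.E) (y : List G.E) :
    G.greenW w (e :: y) = (if G.red e then 0 else w e) + G.greenW w y := by
  simp [greenW]

/-- Splicing out the part between two occurrences of the same edge keeps a path. -/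
lemma isPath_splice {u v : V} {x y z : List G.E} {e : G.E}
    (h : G.IsPath u v (x ++ e :: (y ++ e :: z))) : G.IsPath u v (x ++ e :: z) := by
  obtain ⟨hne, hh, hl, hc⟩ := h
  refine ⟨by simp, ?_, ?_, ?_⟩
  · intro a ha
    apply hh
    simp only [List.head?_append, List.head?_cons] at ha ⊢
    exact ha
  · intro a ha
    apply hl
    have h1 : (x ++ e :: z).getLast? = (e :: z).getLast? := by
      rw [List.getLast?_append, List.getLast?_eq_getLast (l := e :: z) (by simp), Option.some_or]
    have h2 : (x ++ e :: (y ++ e :: z)).getLast? = (e :: z).getLast? := by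
      have : x ++ e :: (y ++ e :: z) = (x ++ e :: y) ++ e :: z := by simp
      rw [this, List.getLast?_append, List.getLast?_eq_getLast (l := e :: z) (by simp),
        Option.some_or]
    rw [h1] at ha
    rw [h2]
    exact ha
  · have hx : x ++ e :: (y ++ e :: z) = x ++ ((e :: y) ++ e :: z) := by simp
    dsimp only [List.Chain'] at hc ⊢
    rw [hx, List.isChain_append, List.isChain_append] at hc
    obtain ⟨hcx, ⟨-, hcez, -⟩, hlink⟩ := hc
    rw [List.isChain_append]
    refine ⟨hcx, hcez, ?_⟩
    intro a ha b hb
    exact hlink a ha b (by simpa using hb)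

lemma sublist_cons_decomp {α : Type*} :
    ∀ {l : List α} {a : α} {t : List α}, (a :: t).Sublist l → ∃ x y, l = x ++ a :: y ∧ t.Sublist y := by
  intro l
  induction l with
  | nil => intro a t h; exact absurd h (by simp)
  | cons b l ih =>
    intro a t h
    cases h with
    | cons _ =>
      rename_i h'
      obtain ⟨x, y, rfl, hty⟩ := ih h'
      exact ⟨b :: x, y, rfl, hty⟩
    | cons_cons _ => rename_i h'; exact ⟨[], l, rfl, h'⟩

lemma not_nodup_decomp {α : Type*} {l : List α} (h : ¬ l.Nodup) :
    ∃ (x y z : List α) (a : α), l = x ++ a :: (y ++ a :: z) := by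
  rw [List.nodup_iff_sublist] at h
  push_neg at h
  obtain ⟨a, ha⟩ := h
  obtain ⟨x, y', rfl, h1⟩ := sublist_cons_decomp ha
  obtain ⟨y, z, rfl, -⟩ := sublist_cons_decomp h1
  exact ⟨x, y, z, a, rfl⟩

/-- Every path dominates a path without repeated edges. -/
lemma exists_nodup_le (hw : ∀ e : G.E, 0 < w e) {u v : V} :
    ∀ (n : ℕ) (p : List G.E), p.length ≤ n → G.IsPath u v p →
      ∃ q, G.IsPath u v q ∧ q.Nodup ∧ G.redW w q ≤ G.redW w p ∧ G.greenW w q ≤ G.greenW w p := by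
  intro n
  induction n with
  | zero =>
    intro p hlen hp
    exact ⟨p, hp, by rw [List.length_eq_zero_iff.mp (Nat.le_zero.mp hlen)]; exact List.nodup_nil,
      le_refl _, le_refl _⟩
  | succ n ih =>
    intro p hlen hp
    by_cases hnd : p.Nodup
    · exact ⟨p, hp, hnd, le_refl _, le_refl _⟩
    · obtain ⟨x, y, z, a, rfl⟩ := not_nodup_decomp hnd
      have hp' := G.isPath_splice hp
      have hlen' : (x ++ a :: z).length ≤ n := by
        simp only [List.length_append, List.length_cons] at hlen ⊢
        omega
      obtain ⟨q, hq, hqnd, hqr, hqg⟩ := ih (x ++ a :: z) hlen' hp'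
      refine ⟨q, hq, hqnd, ?_, ?_⟩
      · refine hqr.trans ?_
        simp only [redW_append, redW_cons]
        have h1 : 0 ≤ G.redW w y := G.redW_nonneg w hw y
        have h2 : (0 : ℝ) ≤ if G.red a then w a else 0 := by
          split <;> [exact (hw a).le; rfl]
        linarith
      · refine hqg.trans ?_
        simp only [greenW_append, greenW_cons]
        have h1 : 0 ≤ G.greenW w y := G.greenW_nonneg w hw y
        have h2 : (0 : ℝ) ≤ if G.red a then 0 else w a := by
          split <;> [rfl; exact (hw a).le]
        linarith

lemma finite_nodup [Fintype G.E] : {q : List G.E | q.Nodup}.Finite := by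
  exact (List.finite_length_le G.E (Fintype.card G.E)).subset
    (fun l hl => hl.length_le_card)

/-- Every path dominates a minimal path without repeated edges. -/
lemma exists_minimal_le [Fintype G.E] (hw : ∀ e : G.E, 0 < w e) {u v : V} (p : List G.E)
    (hp : G.IsPath u v p) :
    ∃ q, G.Minimal w u v q ∧ q.Nodup ∧ G.redW w q ≤ G.redW w p ∧ G.greenW w q ≤ G.greenW w p := by
  classical
  set S : Set (List G.E) :=
    {q | G.IsPath u v q ∧ q.Nodup ∧ G.redW w q ≤ G.redW w p ∧ G.greenW w q ≤ G.greenW w p} with hS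
  have hSfin : S.Finite := G.finite_nodup.subset (fun q hq => hq.2.1)
  have hSne : S.Nonempty := by
    obtain ⟨q, hq, hnd, hr, hg⟩ := G.exists_nodup_le w hw p.length p (le_refl _) hp
    exact ⟨q, hq, hnd, hr, hg⟩
  set T : Set ℝ := (fun q => G.redW w q + G.greenW w q) '' S with hT
  have hTfin : T.Finite := hSfin.image _
  have hTne : T.Nonempty := hSne.image _
  obtain ⟨q₀, hq₀S, hq₀min⟩ : ∃ q₀ ∈ S, G.redW w q₀ + G.greenW w q₀ = sInf T := by
    have := hTne.csInf_mem hTfin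
    obtain ⟨q₀, hq₀, hval⟩ := this
    exact ⟨q₀, hq₀, hval⟩
  have hlb : ∀ q ∈ S, G.redW w q₀ + G.greenW w q₀ ≤ G.redW w q + G.greenW w q := by
    intro q hq
    rw [hq₀min]
    exact csInf_le hTfin.bddBelow ⟨q, hq, rfl⟩
  refine ⟨q₀, ⟨hq₀S.1, ?_⟩, hq₀S.2.1, hq₀S.2.2.1, hq₀S.2.2.2⟩
  intro s hs hsr hsg
  obtain ⟨s', hs', hs'nd, hs'r, hs'g⟩ := G.exists_nodup_le w hw s.length s (le_refl _) hs
  have hs'S : s' ∈ S := ⟨hs', hs'nd, le_trans (hs'r.trans hsr) hq₀S.2.2.1,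
    le_trans (hs'g.trans hsg) hq₀S.2.2.2⟩
  have h1 := hlb s' hs'S
  constructor
  · linarith [hs'r.trans hsr, hs'g.trans hsg]
  · linarith [hs'r.trans hsr, hs'g.trans hsg]

/-- Every minimal path has a nodup minimal path with the same weights. -/
lemma minimal_nodup_rep [Fintype G.E] (hw : ∀ e : G.E, 0 < w e) {u v : V} {q : List G.E}
    (hq : G.Minimal w u v q) :
    ∃ q', G.Minimal w u v q' ∧ q'.Nodup ∧ G.redW w q' = G.redW w q ∧
      G.greenW w q' = G.greenW w q := by
  obtain ⟨q', hq', hnd, hr, hg⟩ := G.exists_minimal_le w hw q hq.1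
  obtain ⟨h1, h2⟩ := hq.2 q' hq'.1 hr hg
  exact ⟨q', hq', hnd, h1, h2⟩

end BiGraph

/-- **Lemma 4.** Let `G` be a finite weighted bicoloured-edge graph with
strictly positive weights `w`, and `u`, `v` vertices joined both by a pure green path
and by a pure red path.  Then for every `r` with `0 ≤ r < r_tot` there is a red edge
`e` with `Δ(r) = Δ_e(r)` (in particular `Δ_e(r) < ∞`, i.e. the defining set of
`Δ_e(r)` is nonempty). -/
theorem Delta_eq_DeltaE {V : Type} [Fintype V] (G : BiGraph V) [Fintype G.E]
    (w : G.E → ℝ) (hw : ∀ e : G.E, 0 < w e)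
    (u v : V)
    (hgreen : ∃ p : List G.E, G.IsPath u v p ∧ ∀ e ∈ p, G.red e = false)
    (hred : ∃ p : List G.E, G.IsPath u v p ∧ ∀ e ∈ p, G.red e = true)
    (r : ℝ) (hr : 0 ≤ r) (hrtot : r < G.rtot w u v) :
    ∃ e : G.E, G.red e = true ∧ (G.DeltaESet w u v e r).Nonempty ∧
      G.Delta w u v r = G.DeltaE w u v e r := by
  classical
  obtain ⟨pg, hpg, hpgcol⟩ := hgreen
  obtain ⟨pr, hpr, hprcol⟩ := hred
  have hpg_red : G.redW w pg = 0 := by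
    apply List.sum_eq_zero
    intro x hx
    simp only [List.mem_map] at hx
    obtain ⟨e, he, rfl⟩ := hx
    simp [hpgcol e he]
  have hpr_green : G.greenW w pr = 0 := by
    apply List.sum_eq_zero
    intro x hx
    simp only [List.mem_map] at hx
    obtain ⟨e, he, rfl⟩ := hx
    simp [hprcol e he]
  -- The set C of nodup minimal paths with red weight at most r, and g its least green wt
  set C : Set (List G.E) :=
    {q | G.Minimal w u v q ∧ q.Nodup ∧ G.redW w q ≤ r} with hC
  have hCfin : C.Finite := G.finite_nodup.subset (fun q hq => hq.2.1)
  have hCne : C.Nonempty := by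
    obtain ⟨q, hq, hnd, hqr, hqg⟩ := G.exists_minimal_le w hw pg hpg
    exact ⟨q, hq, hnd, by rw [hpg_red] at hqr; linarith⟩
  have hCgfin : (G.greenW w '' C).Finite := hCfin.image _
  have hCgne : (G.greenW w '' C).Nonempty := hCne.image _
  obtain ⟨p₀, hp₀C, hp₀g⟩ : ∃ p₀ ∈ C, G.greenW w p₀ = sInf (G.greenW w '' C) :=
    hCgne.csInf_mem hCgfin
  set g : ℝ := sInf (G.greenW w '' C) with hgdef
  -- Claim A: any path with red weight ≤ r has green weight ≥ g
  have claimA : ∀ p, G.IsPath u v p → G.redW w p ≤ r → g ≤ G.greenW w p := by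
    intro p hp hpr'
    obtain ⟨q, hq, hnd, hqr, hqg⟩ := G.exists_minimal_le w hw p hp
    have hqC : q ∈ C := ⟨hq, hnd, hqr.trans hpr'⟩
    exact (csInf_le hCgfin.bddBelow ⟨q, hqC, rfl⟩).trans hqg
  -- the defining sets of Delta
  set A : Set ℝ := G.redW w '' {q | G.Minimal w u v q ∧ r < G.redW w q} with hA
  set B : Set ℝ := G.redW w '' {q | G.Minimal w u v q ∧ q.Nodup ∧ r < G.redW w q} with hB
  have hAB : A = B := by
    apply Set.Subset.antisymm
    · rintro x ⟨q, ⟨hq, hqr⟩, rfl⟩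
      obtain ⟨q', hq', hnd', hr', hg'⟩ := G.minimal_nodup_rep w hw hq
      exact ⟨q', ⟨hq', hnd', hr' ▸ hqr⟩, hr'⟩
    · rintro x ⟨q, ⟨hq, -, hqr⟩, rfl⟩
      exact ⟨q, ⟨hq, hqr⟩, rfl⟩
  have hBfin : B.Finite := (G.finite_nodup.subset (fun q hq => hq.2.1)).image _
  have hBne : B.Nonempty := by
    obtain ⟨q, hq, hnd, hqr, hqg⟩ := G.exists_minimal_le w hw pr hpr
    have hq_red : ∀ e ∈ q, G.red e = true := by
      intro e he
      by_contra hcontra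
      have h1 : (if G.red e then 0 else w e) ≤ G.greenW w q := by
        apply List.single_le_sum
        · intro x hx
          simp only [List.mem_map] at hx
          obtain ⟨e', -, rfl⟩ := hx
          split <;> [rfl; exact (hw e').le]
        · exact List.mem_map_of_mem he
      rw [if_neg hcontra] at h1
      rw [hpr_green] at hqg
      linarith [hw e]
    have hrtot_le : G.rtot w u v ≤ G.redW w q := by
      apply csInf_le
      · exact ⟨0, by rintro x ⟨p, -, rfl⟩; exact G.redW_nonneg w hw p⟩
      · exact ⟨q, ⟨hq.1, hq_red⟩, rfl⟩
    exact ⟨G.redW w q, ⟨q, ⟨hq, hnd, lt_of_lt_of_le hrtot hrtot_le⟩, rfl⟩⟩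
  have hDeltaB : G.Delta w u v r = sInf B := by rw [BiGraph.Delta, ← hA, hAB]
  obtain ⟨qs, ⟨hqs, hqsnd, hqsr⟩, hqsval⟩ : ∃ qs, (G.Minimal w u v qs ∧ qs.Nodup ∧
      r < G.redW w qs) ∧ G.redW w qs = sInf B := hBne.csInf_mem hBfin
  -- green weight of qs is < g
  have hqs_green : G.greenW w qs < g := by
    by_contra hcon
    push_neg at hcon
    have h1 := hqs.2 p₀ hp₀C.1.1 (le_of_lt (lt_of_le_of_lt hp₀C.2.2 hqsr))
      (by rw [hp₀g]; exact hcon)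
    linarith [hp₀C.2.2, hqsr, h1.1]
  -- find a red edge of qs not in p₀
  obtain ⟨e, heqs, hered, henp⟩ : ∃ e, e ∈ qs ∧ G.red e = true ∧ e ∉ p₀ := by
    by_contra hcon
    push_neg at hcon
    have hred_sub : ∀ e ∈ qs, G.red e = true → e ∈ p₀ := fun e he hre => hcon e he hre
    set f : G.E → ℝ := fun e => if G.red e then w e else 0 with hf
    have hfnn : ∀ e, 0 ≤ f e := by
      intro e; simp only [hf]; split <;> [exact (hw e).le; rfl]
    have h1 : G.redW w qs = ∑ e ∈ qs.toFinset, f e :=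
      (List.sum_toFinset f hqsnd).symm
    have h2 : G.redW w p₀ = ∑ e ∈ p₀.toFinset, f e :=
      (List.sum_toFinset f hp₀C.2.1).symm
    have h3 : ∑ e ∈ qs.toFinset, f e = ∑ e ∈ qs.toFinset.filter (fun e => G.red e), f e := by
      rw [Finset.sum_filter_of_ne]
      intro x hx hfx
      simp only [hf] at hfx
      by_contra hb
      simp [hb] at hfx
    have h4 : qs.toFinset.filter (fun e => G.red e) ⊆ p₀.toFinset := by
      intro x hx
      simp only [Finset.mem_filter, List.mem_toFinset] at hx
      exact List.mem_toFinset.mpr (hred_sub x hx.1 hx.2)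
    have h5 : ∑ e ∈ qs.toFinset.filter (fun e => G.red e), f e ≤ ∑ e ∈ p₀.toFinset, f e :=
      Finset.sum_le_sum_of_subset_of_nonneg h4 (fun i _ _ => hfnn i)
    have : G.redW w qs ≤ G.redW w p₀ := by rw [h1, h2, h3]; exact h5
    linarith [hp₀C.2.2, hqsr]
  -- gVal e r = g
  have hgval : G.gVal w u v e r = g := by
    have hp₀mem : p₀ ∈ {p | G.IsPath u v p ∧ e ∉ p ∧ G.redW w p ≤ r} :=
      ⟨hp₀C.1.1, henp, hp₀C.2.2⟩
    have h0 : BddBelow (G.greenW w '' {p | G.IsPath u v p ∧ e ∉ p ∧ G.redW w p ≤ r}) :=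
      ⟨0, by rintro x ⟨p, -, rfl⟩; exact G.greenW_nonneg w hw p⟩
    apply le_antisymm
    · have h1 : G.gVal w u v e r ≤ G.greenW w p₀ := csInf_le h0 ⟨p₀, hp₀mem, rfl⟩
      exact h1.trans_eq hp₀g
    · refine le_csInf ⟨G.greenW w p₀, p₀, hp₀mem, rfl⟩ ?_
      rintro b ⟨p, ⟨hp, -, hpr'⟩, rfl⟩
      exact claimA p hp hpr'
  have hqsDE : qs ∈ G.DeltaESet w u v e r :=
    ⟨hqs.1, heqs, by rw [hgval]; exact hqs_green⟩
  refine ⟨e, hered, ⟨qs, hqsDE⟩, ?_⟩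
  apply le_antisymm
  · -- Delta ≤ DeltaE
    refine le_csInf ⟨G.redW w qs, qs, hqsDE, rfl⟩ ?_
    rintro b ⟨q, ⟨hq, -, hqg⟩, rfl⟩
    obtain ⟨q', hq', hnd', hq'r, hq'g⟩ := G.exists_minimal_le w hw q hq
    have hq'r_gt : r < G.redW w q' := by
      by_contra hcon
      push_neg at hcon
      have := claimA q' hq'.1 hcon
      rw [hgval] at hqg
      linarith
    have : sInf B ≤ G.redW w q' := csInf_le hBfin.bddBelow ⟨q', ⟨hq', hnd', hq'r_gt⟩, rfl⟩
    rw [hDeltaB]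
    linarith
  · -- DeltaE ≤ Delta
    rw [hDeltaB, ← hqsval]
    apply csInf_le
    · exact ⟨0, by rintro x ⟨p, -, rfl⟩; exact G.redW_nonneg w hw p⟩
    · exact ⟨qs, hqsDE, rfl⟩
end
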